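/- arXiv:math/0601706 — 4 statements merged into one kernel-verified Lean document; each statement's English description precedes it below -/
import Mathlib

section
/- For every nonzero integer j and every integer k with 2k ≥ j + 2, the element (u·w)^{2k−j−1} · v · w · v · (w·u)^j commutes with x. -/
section Aux

variable {A : Type*} [Ring A] (x y : A)

/-- elements commuting with both `x` and `y` -/
def Pc (a : Aˣ) : Prop := (a : A) * x = x * a ∧ (a : A) * y = y * a

/-- elements swapping `x` and `y` by conjugation -/
def Qc (a : Aˣ) : Prop := (a : A) * x = y * a ∧ (a : A) * y = x * a

variable {x y}

private lemma mulaux {a b : Aˣ} {z z' z'' : A} (ha : (a : A) * z' = z'' * a)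
    (hb : (b : A) * z = z' * b) : ((a * b : Aˣ) : A) * z = z'' * (a * b) := by
  push_cast
  rw [mul_assoc, hb, ← mul_assoc, ha, mul_assoc]

private lemma invaux {a : Aˣ} {z z' : A} (h : (a : A) * z = z' * a) :
    ((a⁻¹ : Aˣ) : A) * z' = z * a⁻¹ := by
  have : ((a⁻¹ : Aˣ) : A) * z' = (a⁻¹ : Aˣ) * z' * ((a : A) * (a⁻¹ : Aˣ)) := by
    rw [Units.mul_inv, mul_one]
  rw [this, ← mul_assoc, mul_assoc ((a⁻¹ : Aˣ) : A), ← h, ← mul_assoc,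
    Units.inv_mul, one_mul]

lemma Pc.mul {a b : Aˣ} (ha : Pc x y a) (hb : Pc x y b) : Pc x y (a * b) :=
  ⟨mulaux ha.1 hb.1, mulaux ha.2 hb.2⟩

lemma Pc.inv {a : Aˣ} (ha : Pc x y a) : Pc x y a⁻¹ :=
  ⟨invaux ha.1, invaux ha.2⟩

lemma Qc.mul_qc {a b : Aˣ} (ha : Qc x y a) (hb : Qc x y b) : Pc x y (a * b) :=
  ⟨mulaux ha.2 hb.1, mulaux ha.1 hb.2⟩

lemma Pc.mul_qc {a b : Aˣ} (ha : Pc x y a) (hb : Qc x y b) : Qc x y (a * b) :=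
  ⟨mulaux ha.2 hb.1, mulaux ha.1 hb.2⟩

lemma Qc.mul_pc {a b : Aˣ} (ha : Qc x y a) (hb : Pc x y b) : Qc x y (a * b) :=
  ⟨mulaux ha.1 hb.1, mulaux ha.2 hb.2⟩

/-- `Pc` as a subgroup of the units. -/
def Pg (x y : A) : Subgroup Aˣ where
  carrier := {a | Pc x y a}
  one_mem' := ⟨by simp, by simp⟩
  mul_mem' := Pc.mul
  inv_mem' := Pc.inv

lemma Pc.zpow {a : Aˣ} (ha : Pc x y a) (n : ℤ) : Pc x y (a ^ n) :=
  (Pg x y).zpow_mem ha n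

lemma Qc.zpow_even {a : Aˣ} (ha : Qc x y a) {n : ℤ} (hn : Even n) :
    Pc x y (a ^ n) := by
  obtain ⟨t, rfl⟩ := hn
  have h2 : a ^ (t + t) = (a * a) ^ t := by
    rw [← two_mul, zpow_mul, zpow_two]
  rw [h2]
  exact (ha.mul_qc ha).zpow t

lemma Qc.zpow_odd {a : Aˣ} (ha : Qc x y a) {n : ℤ} (hn : Odd n) :
    Qc x y (a ^ n) := by
  obtain ⟨t, rfl⟩ := hn
  have h2 : a ^ (2 * t + 1) = a ^ (2 * t) * a := by
    rw [zpow_add, zpow_one]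
  rw [h2]
  exact (ha.zpow_even ⟨t, (two_mul t).symm ▸ rfl⟩).mul_qc ha

end Aux

/-- In a unital ring `A` with invertible elements `u, v, w` such that
`w * w = 1` and such that `u` and `v` each commute with both `x` and `w * x * w`, for
every nonzero integer `j` and every integer `k` with `2 * k ≥ j + 2`, the element
`(u * w) ^ (2 * k - j - 1) * v * w * v * (w * u) ^ j` commutes with `x`. -/
theorem commutes_with_word {A : Type*} [Ring A] (u v w : Aˣ) (x : A)
    (hw : w * w = 1)
    (hux : (u : A) * x = x * u) (hvx : (v : A) * x = x * v)
    (huwxw : (u : A) * ((w : A) * x * w) = ((w : A) * x * w) * u)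
    (hvwxw : (v : A) * ((w : A) * x * w) = ((w : A) * x * w) * v)
    (j k : ℤ) (hj : j ≠ 0) (hk : 2 * k ≥ j + 2) :
    (((u * w) ^ (2 * k - j - 1) * v * w * v * (w * u) ^ j : Aˣ) : A) * x
      = x * (((u * w) ^ (2 * k - j - 1) * v * w * v * (w * u) ^ j : Aˣ) : A) := by
  set y : A := (w : A) * x * w with hy
  have hwA : (w : A) * w = 1 := by
    calc (w : A) * w = ((w * w : Aˣ) : A) := by push_cast; ring
    _ = 1 := by rw [hw]; rfl
  have hu : Pc x y u := ⟨hux, huwxw⟩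
  have hv : Pc x y v := ⟨hvx, hvwxw⟩
  have hwq : Qc x y w := by
    constructor
    · -- w * x = y * w
      rw [hy, mul_assoc, hwA, mul_one]
    · -- w * y = x * w
      rw [hy, ← mul_assoc, ← mul_assoc, hwA, one_mul]
  have huw : Qc x y (u * w) := hu.mul_qc hwq
  have hwu : Qc x y (w * u) := hwq.mul_pc hu
  have hmid : Qc x y (v * w * v) := (hv.mul_qc hwq).mul_pc hv
  have key : Pc x y ((u * w) ^ (2 * k - j - 1) * v * w * v * (w * u) ^ j) := by
    have hrw : (u * w) ^ (2 * k - j - 1) * v * w * v * (w * u) ^ j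
        = (u * w) ^ (2 * k - j - 1) * (v * w * v) * (w * u) ^ j := by
      group
    rw [hrw]
    rcases Int.even_or_odd j with hje | hjo
    · have hm : Odd (2 * k - j - 1) := by
        rcases hje with ⟨t, rfl⟩
        exact ⟨k - t - 1, by ring⟩
      exact ((huw.zpow_odd hm).mul_qc hmid).mul (hwu.zpow_even hje)
    · have hm : Even (2 * k - j - 1) := by
        rcases hjo with ⟨t, rfl⟩
        exact ⟨k - t - 1, by ring⟩
      exact ((huw.zpow_even hm).mul_qc hmid).mul_qc (hwu.zpow_odd hjo)
  exact key.1
end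

section
/- With u := j₁(E₁₂)·j_θ(E₂₁), for every c ∈ C one has u · j_θ(θ(c)·E₁₁) · u* = j_θ(c·E₁₁), where θ(c)·E₁₁ and c·E₁₁ denote the 2×2 matrices with θ(c) (respectively c) in the (1,1) entry and 0 elsewhere. Moreover u · j_θ(E₁₂) = j₁(E₁₂). -/
open Matrix

lemma star_stdBasisMatrix' {α : Type*} [AddMonoid α] [StarAddMonoid α]
    (i j : Fin 2) (a : α) :
    star (Matrix.single i j a) = Matrix.single j i (star a) := by
  ext k l
  simp [Matrix.star_apply, Matrix.single, and_comm]
  split <;> simp_all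

lemma sbm00 {α : Type*} [Zero α] (a : α) :
    Matrix.single (0 : Fin 2) 0 a = Matrix.diagonal ![a, 0] := by
  ext k l
  fin_cases k <;> fin_cases l <;> simp [Matrix.single, Matrix.diagonal]

lemma sbm11 {α : Type*} [Zero α] (a : α) :
    Matrix.single (1 : Fin 2) 1 a = Matrix.diagonal ![0, a] := by
  ext k l
  fin_cases k <;> fin_cases l <;> simp [Matrix.single, Matrix.diagonal]

/-- In the setting of star rings `B ⊇ C` (the subring modelled by an
injective unital star-ring embedding `incl : C →+* B`), `θ : C →+* B` a unital
star-ring homomorphism, and unital star-ring homomorphisms `jθ : M₂(B) →+* 𝒜`,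
`j₁ : M₂(C) →+* 𝒜` with `jθ (diag (c₁, θ c₂)) = j₁ (diag (c₁, c₂))`, the element
`u := j₁ E₁₂ * jθ E₂₁` satisfies `u * jθ (θ(c)·E₁₁) * u* = jθ (c·E₁₁)` for every
`c ∈ C`, and moreover `u * jθ E₁₂ = j₁ E₁₂`. -/
theorem hnn_stable_unitary_relation {B C 𝒜 : Type*} [Ring B] [StarRing B] [Ring C]
    [StarRing C] [Ring 𝒜] [StarRing 𝒜]
    (incl : C →+* B) (hincl_star : ∀ c : C, incl (star c) = star (incl c))
    (hincl_inj : Function.Injective incl)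
    (θ : C →+* B) (hθ_star : ∀ c : C, θ (star c) = star (θ c))
    (jθ : Matrix (Fin 2) (Fin 2) B →+* 𝒜)
    (hjθ_star : ∀ m : Matrix (Fin 2) (Fin 2) B, jθ (star m) = star (jθ m))
    (j₁ : Matrix (Fin 2) (Fin 2) C →+* 𝒜)
    (hj₁_star : ∀ m : Matrix (Fin 2) (Fin 2) C, j₁ (star m) = star (j₁ m))
    (hcompat : ∀ c₁ c₂ : C,
      jθ (Matrix.diagonal ![incl c₁, θ c₂]) = j₁ (Matrix.diagonal ![c₁, c₂])) :
    (∀ c : C,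
      (j₁ (Matrix.single 0 1 1) * jθ (Matrix.single 1 0 1)) *
          jθ (Matrix.single 0 0 (θ c)) *
          star (j₁ (Matrix.single 0 1 1) * jθ (Matrix.single 1 0 1))
        = jθ (Matrix.single 0 0 (incl c)))
    ∧ (j₁ (Matrix.single 0 1 1) * jθ (Matrix.single 1 0 1)) *
        jθ (Matrix.single 0 1 1)
      = j₁ (Matrix.single 0 1 1) := by
  have key : ∀ x : C, jθ (Matrix.single 1 1 (θ x))
      = j₁ (Matrix.single 1 1 x) := by
    intro x
    rw [sbm11, sbm11, ← map_zero incl, hcompat]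
  have key0 : ∀ x : C, jθ (Matrix.single 0 0 (incl x))
      = j₁ (Matrix.single 0 0 x) := by
    intro x
    rw [sbm00, sbm00, ← map_zero θ, hcompat]
  constructor
  · intro c
    rw [StarMul.star_mul, ← hjθ_star, ← hj₁_star, star_stdBasisMatrix', star_stdBasisMatrix',
      star_one, star_one]
    calc j₁ (single 0 1 1) * jθ (single 1 0 1) *
          jθ (single 0 0 (θ c)) *
          (jθ (single 0 1 1) * j₁ (single 1 0 1))
        = j₁ (single 0 1 1) *
            jθ (single 1 0 1 * single 0 0 (θ c) * single 0 1 1) *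
            j₁ (single 1 0 1) := by
          simp only [_root_.map_mul, mul_assoc]
      _ = j₁ (single 0 1 1) * jθ (single 1 1 (θ c)) *
            j₁ (single 1 0 1) := by
          rw [Matrix.single_mul_single_same, Matrix.single_mul_single_same,
            one_mul, mul_one]
      _ = j₁ (single 0 1 1 * single 1 1 c * single 1 0 1) := by
          rw [key]; simp only [_root_.map_mul]
      _ = jθ (single 0 0 (incl c)) := by
          rw [Matrix.single_mul_single_same, Matrix.single_mul_single_same,
            one_mul, mul_one, key0]
  · have : (Matrix.single 1 0 1 : Matrix (Fin 2) (Fin 2) B) *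
        Matrix.single 0 1 1 = Matrix.single 1 1 (θ 1) := by
      rw [Matrix.single_mul_single_same, one_mul, _root_.map_one]
    rw [mul_assoc, ← _root_.map_mul, this, key,
      ← _root_.map_mul, Matrix.single_mul_single_same, mul_one]
end

section
/- Let θ, ι : C → B, κ : B → A, δ : A → C′ × C′ and θ′, ι′ : C′ → B′ be homomorphisms of abelian groups. If ker δ = range ψ_{κ,ι} and range δ ⊆ ker φ_{θ′,ι′}, then ker(π₂ ∘ δ) = range κ. -/
/-- If `ker δ = range ψ_{κ,ι}` and `range δ ⊆ ker φ_{θ',ι'}`, then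
`ker (π₂ ∘ δ) = range κ`. -/
theorem ker_pi2_delta_eq_range_kappa {A B C C' B' : Type*} [AddCommGroup A]
    [AddCommGroup B] [AddCommGroup C] [AddCommGroup C'] [AddCommGroup B']
    (θ ι : C →+ B) (κ : B →+ A) (δ : A →+ C' × C') (θ' ι' : C' →+ B')
    (ψ : B × C →+ A) (hψ : ∀ (x : B) (y : C), ψ (x, y) = κ x - κ (ι y))
    (φ' : C' × C' →+ B' × C') (hφ' : ∀ x y : C', φ' (x, y) = (ι' x + θ' y, x + y))
    (h₁ : AddMonoidHom.ker δ = AddMonoidHom.range ψ)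
    (h₂ : AddMonoidHom.range δ ≤ AddMonoidHom.ker φ') :
    AddMonoidHom.ker ((AddMonoidHom.snd C' C').comp δ) = AddMonoidHom.range κ := by
  ext a
  simp only [AddMonoidHom.mem_ker, AddMonoidHom.coe_comp, Function.comp_apply,
    AddMonoidHom.coe_snd, AddMonoidHom.mem_range]
  constructor
  · intro h
    have hmem : δ a ∈ AddMonoidHom.ker φ' := h₂ ⟨a, rfl⟩
    have hδ : δ a = ((δ a).1, (δ a).2) := rfl
    have : φ' ((δ a).1, (δ a).2) = 0 := by rw [← hδ]; exact hmem
    rw [hφ'] at this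
    have h1 : (δ a).1 + (δ a).2 = 0 := congrArg Prod.snd this
    have hsnd : (δ a).2 = 0 := h
    rw [hsnd] at h1
    have hfst : (δ a).1 = 0 := by simpa using h1
    have hδ0 : δ a = 0 := by
      rw [hδ, hfst, hsnd]; rfl
    have : a ∈ AddMonoidHom.range ψ := h₁ ▸ hδ0
    obtain ⟨⟨x, y⟩, hxy⟩ := this
    exact ⟨x - ι y, by rw [map_sub, ← hψ x y, hxy]⟩
  · rintro ⟨x, rfl⟩
    have : κ x ∈ AddMonoidHom.ker δ := by
      rw [h₁]
      exact ⟨(x, 0), by rw [hψ]; simp⟩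
    rw [AddMonoidHom.mem_ker] at this
    rw [this]; rfl
end

section
/- Let C₀, B₀, A₀, C₁, B₁, A₁ be abelian groups with homomorphisms θᵢ, ιᵢ : Cᵢ → Bᵢ and κᵢ : Bᵢ → Aᵢ (i = 0, 1), δ₀ : A₀ → C₁ × C₁ and δ₁ : A₁ → C₀ × C₀. Assume the cyclic six-term sequence C₀ × C₀ → B₀ × C₀ → A₀ → C₁ × C₁ → B₁ × C₁ → A₁ → C₀ × C₀ with maps φ_{θ₀,ι₀}, ψ_{κ₀,ι₀}, δ₀, φ_{θ₁,ι₁}, ψ_{κ₁,ι₁}, δ₁ is exact at every one of the six spots (in particular ker φ_{θ₀,ι₀} = range δ₁ and ker φ_{θ₁,ι₁} = range δ₀). Then the cyclic six-term sequence C₀ → B₀ → A₀ → C₁ → B₁ → A₁ → C₀ with maps θ₀ − ι₀, κ₀, π₂ ∘ δ₀, θ₁ − ι₁, κ₁, π₂ ∘ δ₁ is exact at every one of the six spots. -/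
private lemma snd_apply' {M N : Type*} [AddCommGroup M] [AddCommGroup N] (p : M × N) :
    (AddMonoidHom.snd M N) p = p.2 := rfl

theorem sixTerm_aux {C₀ B₀ A₀ C₁ B₁ : Type*}
    [AddCommGroup C₀] [AddCommGroup B₀] [AddCommGroup A₀]
    [AddCommGroup C₁] [AddCommGroup B₁]
    (θ₀ ι₀ : C₀ →+ B₀) (κ₀ : B₀ →+ A₀) (θ₁ ι₁ : C₁ →+ B₁)
    (δ₀ : A₀ →+ C₁ × C₁)
    (φ₀ : C₀ × C₀ →+ B₀ × C₀) (hφ₀ : ∀ x y : C₀, φ₀ (x, y) = (ι₀ x + θ₀ y, x + y))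
    (ψ₀ : B₀ × C₀ →+ A₀) (hψ₀ : ∀ (x : B₀) (y : C₀), ψ₀ (x, y) = κ₀ x - κ₀ (ι₀ y))
    (φ₁ : C₁ × C₁ →+ B₁ × C₁) (hφ₁ : ∀ x y : C₁, φ₁ (x, y) = (ι₁ x + θ₁ y, x + y))
    (e₁ : AddMonoidHom.ker ψ₀ = AddMonoidHom.range φ₀)
    (e₂ : AddMonoidHom.ker δ₀ = AddMonoidHom.range ψ₀)
    (e₃ : AddMonoidHom.ker φ₁ = AddMonoidHom.range δ₀) :
    AddMonoidHom.ker κ₀ = AddMonoidHom.range (θ₀ - ι₀)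
    ∧ AddMonoidHom.ker ((AddMonoidHom.snd C₁ C₁).comp δ₀) = AddMonoidHom.range κ₀
    ∧ AddMonoidHom.ker (θ₁ - ι₁)
        = AddMonoidHom.range ((AddMonoidHom.snd C₁ C₁).comp δ₀) := by
  -- basic consequence: κ₀ (θ₀ y) = κ₀ (ι₀ y)
  have key : ∀ y : C₀, κ₀ (θ₀ y) = κ₀ (ι₀ y) := by
    intro y
    have h0 : φ₀ (0, y) ∈ AddMonoidHom.range φ₀ := ⟨(0, y), rfl⟩
    rw [← e₁, AddMonoidHom.mem_ker, hφ₀, hψ₀] at h0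
    simp only [map_zero, zero_add] at h0
    exact sub_eq_zero.mp h0
  refine ⟨?_, ?_, ?_⟩
  · ext b
    simp only [AddMonoidHom.mem_ker, AddMonoidHom.mem_range, AddMonoidHom.sub_apply]
    constructor
    · intro hb
      have h0 : (b, (0 : C₀)) ∈ AddMonoidHom.ker ψ₀ := by
        simp [AddMonoidHom.mem_ker, hψ₀, hb]
      rw [e₁] at h0
      obtain ⟨⟨x, y⟩, hxy⟩ := h0
      rw [hφ₀, Prod.mk.injEq] at hxy
      obtain ⟨h1, h2⟩ := hxy
      have hx : x = -y := by rw [eq_neg_iff_add_eq_zero]; exact h2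
      refine ⟨y, ?_⟩
      rw [← h1, hx, map_neg]
      abel
    · rintro ⟨c, rfl⟩
      rw [map_sub, key, sub_self]
  · ext a
    simp only [AddMonoidHom.mem_ker, AddMonoidHom.mem_range, AddMonoidHom.coe_comp,
      Function.comp_apply, snd_apply']
    constructor
    · intro ha
      have hmem : φ₁ (δ₀ a) = 0 := by
        have : δ₀ a ∈ AddMonoidHom.ker φ₁ := by rw [e₃]; exact ⟨a, rfl⟩
        exact this
      have hda : δ₀ a = 0 := by
        have heq : δ₀ a = ((δ₀ a).1, (δ₀ a).2) := rfl
        rw [heq, ha] at hmem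
        rw [hφ₁, Prod.mk.injEq] at hmem
        have h2 : (δ₀ a).1 = 0 := by
          have := hmem.2; simpa using this
        rw [heq, h2, ha]; rfl
      have : a ∈ AddMonoidHom.ker δ₀ := hda
      rw [e₂] at this
      obtain ⟨⟨x, y⟩, hxy⟩ := this
      rw [hψ₀] at hxy
      exact ⟨x - ι₀ y, by rw [map_sub, hxy]⟩
    · rintro ⟨b, rfl⟩
      have h0 : κ₀ b ∈ AddMonoidHom.range ψ₀ := ⟨(b, 0), by simp [hψ₀]⟩
      rw [← e₂, AddMonoidHom.mem_ker] at h0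
      rw [h0]; rfl
  · ext c
    simp only [AddMonoidHom.mem_ker, AddMonoidHom.mem_range, AddMonoidHom.sub_apply,
      AddMonoidHom.coe_comp, Function.comp_apply, snd_apply']
    constructor
    · intro hc
      have h0 : ((-c, c) : C₁ × C₁) ∈ AddMonoidHom.ker φ₁ := by
        rw [AddMonoidHom.mem_ker, hφ₁, map_neg]
        have h1 : -ι₁ c + θ₁ c = 0 := by
          rw [neg_add_eq_zero]; exact (sub_eq_zero.mp hc).symm
        rw [h1, neg_add_cancel]
        rfl
      rw [e₃] at h0
      obtain ⟨a, ha⟩ := h0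
      exact ⟨a, by rw [ha]⟩
    · rintro ⟨a, rfl⟩
      have hmem : φ₁ (δ₀ a) = 0 := by
        have : δ₀ a ∈ AddMonoidHom.ker φ₁ := by rw [e₃]; exact ⟨a, rfl⟩
        exact this
      have heq : δ₀ a = ((δ₀ a).1, (δ₀ a).2) := rfl
      rw [heq, hφ₁, Prod.mk.injEq] at hmem
      obtain ⟨h1, h2⟩ := hmem
      have hx : (δ₀ a).1 = -(δ₀ a).2 := by rw [eq_neg_iff_add_eq_zero]; exact h2
      have h1' : ι₁ (δ₀ a).1 + θ₁ (δ₀ a).2 = 0 := h1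
      rw [hx, map_neg] at h1'
      rw [neg_add_eq_zero] at h1'
      rw [sub_eq_zero, h1']



/-- If the cyclic six-term sequence
`C₀ × C₀ → B₀ × C₀ → A₀ → C₁ × C₁ → B₁ × C₁ → A₁ → C₀ × C₀` with maps
`φ_{θ₀,ι₀}, ψ_{κ₀,ι₀}, δ₀, φ_{θ₁,ι₁}, ψ_{κ₁,ι₁}, δ₁` is exact at every spot, then the
cyclic six-term sequence `C₀ → B₀ → A₀ → C₁ → B₁ → A₁ → C₀` with maps
`θ₀ - ι₀, κ₀, π₂ ∘ δ₀, θ₁ - ι₁, κ₁, π₂ ∘ δ₁` is exact at every spot. -/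
theorem sixTerm_exact {C₀ B₀ A₀ C₁ B₁ A₁ : Type*}
    [AddCommGroup C₀] [AddCommGroup B₀] [AddCommGroup A₀]
    [AddCommGroup C₁] [AddCommGroup B₁] [AddCommGroup A₁]
    (θ₀ ι₀ : C₀ →+ B₀) (κ₀ : B₀ →+ A₀) (θ₁ ι₁ : C₁ →+ B₁) (κ₁ : B₁ →+ A₁)
    (δ₀ : A₀ →+ C₁ × C₁) (δ₁ : A₁ →+ C₀ × C₀)
    (φ₀ : C₀ × C₀ →+ B₀ × C₀) (hφ₀ : ∀ x y : C₀, φ₀ (x, y) = (ι₀ x + θ₀ y, x + y))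
    (ψ₀ : B₀ × C₀ →+ A₀) (hψ₀ : ∀ (x : B₀) (y : C₀), ψ₀ (x, y) = κ₀ x - κ₀ (ι₀ y))
    (φ₁ : C₁ × C₁ →+ B₁ × C₁) (hφ₁ : ∀ x y : C₁, φ₁ (x, y) = (ι₁ x + θ₁ y, x + y))
    (ψ₁ : B₁ × C₁ →+ A₁) (hψ₁ : ∀ (x : B₁) (y : C₁), ψ₁ (x, y) = κ₁ x - κ₁ (ι₁ y))
    (e₁ : AddMonoidHom.ker ψ₀ = AddMonoidHom.range φ₀)
    (e₂ : AddMonoidHom.ker δ₀ = AddMonoidHom.range ψ₀)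
    (e₃ : AddMonoidHom.ker φ₁ = AddMonoidHom.range δ₀)
    (e₄ : AddMonoidHom.ker ψ₁ = AddMonoidHom.range φ₁)
    (e₅ : AddMonoidHom.ker δ₁ = AddMonoidHom.range ψ₁)
    (e₆ : AddMonoidHom.ker φ₀ = AddMonoidHom.range δ₁) :
    AddMonoidHom.ker κ₀ = AddMonoidHom.range (θ₀ - ι₀)
    ∧ AddMonoidHom.ker ((AddMonoidHom.snd C₁ C₁).comp δ₀) = AddMonoidHom.range κ₀
    ∧ AddMonoidHom.ker (θ₁ - ι₁)
        = AddMonoidHom.range ((AddMonoidHom.snd C₁ C₁).comp δ₀)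
    ∧ AddMonoidHom.ker κ₁ = AddMonoidHom.range (θ₁ - ι₁)
    ∧ AddMonoidHom.ker ((AddMonoidHom.snd C₀ C₀).comp δ₁) = AddMonoidHom.range κ₁
    ∧ AddMonoidHom.ker (θ₀ - ι₀)
        = AddMonoidHom.range ((AddMonoidHom.snd C₀ C₀).comp δ₁) := by
  obtain ⟨a1, a2, a3⟩ := sixTerm_aux θ₀ ι₀ κ₀ θ₁ ι₁ δ₀ φ₀ hφ₀ ψ₀ hψ₀ φ₁ hφ₁ e₁ e₂ e₃
  obtain ⟨b1, b2, b3⟩ := sixTerm_aux θ₁ ι₁ κ₁ θ₀ ι₀ δ₁ φ₁ hφ₁ ψ₁ hψ₁ φ₀ hφ₀ e₄ e₅ e₆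
  exact ⟨a1, a2, a3, b1, b2, b3⟩
end
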